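/- For every finite Boolean list w, the words ℓ(w), r(w) and γ(w) = ℓ(w)·r(w) are Lyndon words with ℓ(w) < r(w), and γ(w) = ℓ(w)·r(w) is the Shirshow decomposition of γ(w): for every factorization γ(w) = v·v' into two nonempty Lyndon words, the length of ℓ(w) is at most the length of v. -/

import Mathlib

/-- One step of the Stern–Brocot state-passing recursion: the state is the pair
`(L, R)` of bounds; a `false` step (left child) replaces `R` by `L + R`, a `true`
step (right child) replaces `L` by `L + R`. -/
def sbStep : ((ℕ × ℕ) × (ℕ × ℕ)) → Bool → ((ℕ × ℕ) × (ℕ × ℕ))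
  | (L, R), false => (L, (L.1 + R.1, L.2 + R.2))
  | (L, R), true  => ((L.1 + R.1, L.2 + R.2), R)

/-- The bounds `(L(w), R(w))` of the node of the Stern–Brocot tree addressed by
the path `w`, starting from `((0,1), (1,0))` at the root. -/
def sbBounds (w : List Bool) : (ℕ × ℕ) × (ℕ × ℕ) :=
  w.foldl sbStep ((0, 1), (1, 0))

/-- The left godfather pair `L(w)`. -/
def sbL (w : List Bool) : ℕ × ℕ := (sbBounds w).1

/-- The right godfather pair `R(w)`. -/
def sbR (w : List Bool) : ℕ × ℕ := (sbBounds w).2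

/-- The Stern–Brocot pair `StBr(w) = L(w) + R(w)` (componentwise sum). -/
def stBr (w : List Bool) : ℕ × ℕ :=
  ((sbL w).1 + (sbR w).1, (sbL w).2 + (sbR w).2)

/-- The order `<_Q` on pairs of nonnegative integers:
`(r,s) <_Q (r',s')` iff `r·s' < r'·s`. -/
def ltQ (p q : ℕ × ℕ) : Prop := p.1 * q.2 < q.1 * p.2

/-- The order `≤_Q` on pairs of nonnegative integers:
`(r,s) ≤_Q (r',s')` iff `r·s' ≤ r'·s`. -/
def leQ (p q : ℕ × ℕ) : Prop := p.1 * q.2 ≤ q.1 * p.2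

/-- The weight `|(r,s)| := r + s` of a pair. -/
def wtQ (p : ℕ × ℕ) : ℕ := p.1 + p.2
/-- One step of the word state-passing recursion over the alphabet
`{a, b}` (encoded as `a = false`, `b = true`): the state is the pair `(ℓ, r)`
of word bounds; a `false` step replaces `r` by the concatenation `ℓ ++ r`,
a `true` step replaces `ℓ` by `ℓ ++ r`. -/
def wStep : (List Bool × List Bool) → Bool → (List Bool × List Bool)
  | (l, r), false => (l, l ++ r)
  | (l, r), true  => (l ++ r, r)

/-- The word bounds `(ℓ(w), r(w))` of the path `w`, starting from
`(a, b) = ([false], [true])` at the empty path. -/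
def wBounds (w : List Bool) : List Bool × List Bool :=
  w.foldl wStep ([false], [true])

/-- The left word bound `ℓ(w)`. -/
def lWord (w : List Bool) : List Bool := (wBounds w).1

/-- The right word bound `r(w)`. -/
def rWord (w : List Bool) : List Bool := (wBounds w).2

/-- The word `γ(w) := ℓ(w) ++ r(w)` attached to a path `w`. -/
def gammaWord (w : List Bool) : List Bool := lWord w ++ rWord w

/-- The strict lexicographic order on words over the two-letter alphabet
`{a, b}` with `a = false < b = true`: `u < v` iff `v = u ++ t` for a nonempty
`t`, or `u` and `v` first differ with an `a` in `u` against a `b` in `v`. -/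
def WordLt (u v : List Bool) : Prop := List.Lex (· < ·) u v

/-- A nonempty word `u` is Lyndon iff `v ++ t < t ++ v` (lexicographically)
for every factorization `u = v ++ t` into nonempty words. -/
def IsLyndon (u : List Bool) : Prop :=
  u ≠ [] ∧ ∀ v t : List Bool, v ≠ [] → t ≠ [] → u = v ++ t →
    WordLt (v ++ t) (t ++ v)


namespace SBAux

abbrev Lx (u v : List Bool) : Prop := List.Lex (· < ·) u v

lemma lx_trans {u v w : List Bool} (h1 : Lx u v) (h2 : Lx v w) : Lx u w :=
  show u < w from lt_trans (show u < v from h1) (show v < w from h2)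

lemma lx_irrefl {u : List Bool} (h : Lx u u) : False := by
  induction u with
  | nil => cases h
  | cons a u ih =>
    cases h with
    | cons h => exact ih h
    | rel h => exact absurd h (lt_irrefl a)

lemma lx_asymm {u v : List Bool} (h1 : Lx u v) (h2 : Lx v u) : False :=
  lx_irrefl (lx_trans h1 h2)

lemma lex_append_left {u : List Bool} : ∀ {x y : List Bool}, Lx x y → Lx (u ++ x) (u ++ y) := by
  induction u with
  | nil => intro x y h; simpa using h
  | cons a u ih => intro x y h; exact List.Lex.cons (ih h)

lemma lex_of_append_left {u : List Bool} : ∀ {x y : List Bool}, Lx (u ++ x) (u ++ y) → Lx x y := by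
  induction u with
  | nil => intro x y h; simpa using h
  | cons a u ih =>
    intro x y h
    cases h with
    | cons h => exact ih h
    | rel h => exact absurd h (lt_irrefl a)

lemma lex_of_prefix (u : List Bool) {t : List Bool} (ht : t ≠ []) : Lx u (u ++ t) := by
  induction u with
  | nil =>
    cases t with
    | nil => exact absurd rfl ht
    | cons b t => exact List.Lex.nil
  | cons a u ih => exact List.Lex.cons ih

lemma lex_dichotomy : ∀ {u v : List Bool}, Lx u v →
    u <+: v ∨ ∀ x y : List Bool, Lx (u ++ x) (v ++ y) := by
  intro u v h
  induction h with
  | nil => left; exact List.nil_prefix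
  | @rel a b l₁ l₂ h => right; intro x y; exact List.Lex.rel h
  | @cons a l₁ l₂ h ih =>
    rcases ih with hp | hxy
    · left; exact List.cons_prefix_cons.mpr ⟨rfl, hp⟩
    · right; intro x y; exact List.Lex.cons (hxy x y)

lemma lex_append_right_cases : ∀ (t : List Bool) {u v : List Bool}, Lx u (t ++ v) →
    t <+: u ∨ ∀ y : List Bool, Lx u (t ++ y) := by
  intro t
  induction t with
  | nil => intro u v h; left; exact List.nil_prefix
  | cons b t ih =>
    intro u v h
    cases u with
    | nil => right; intro y; exact List.Lex.nil
    | cons a u =>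
      cases h with
      | rel h => right; intro y; exact List.Lex.rel h
      | cons h =>
        rcases ih h with hp | hy
        · left; exact List.cons_prefix_cons.mpr ⟨rfl, hp⟩
        · right; intro y; exact List.Lex.cons (hy y)

/-- Lyndon via suffixes: `u` is smaller than all its proper nonempty suffixes. -/
def SLyndon (u : List Bool) : Prop :=
  u ≠ [] ∧ ∀ v t : List Bool, v ≠ [] → t ≠ [] → u = v ++ t → Lx u t

lemma slyndon_singleton (b : Bool) : SLyndon [b] := by
  refine ⟨by simp, ?_⟩
  intro v t hv ht h
  exfalso
  have := congrArg List.length h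
  simp [List.length_append] at this
  have hv' : 0 < v.length := List.length_pos_iff.mpr hv
  have ht' : 0 < t.length := List.length_pos_iff.mpr ht
  omega

lemma append_lex_right {u v : List Bool} (hv : SLyndon v) (huv : Lx u v) (hu : u ≠ []) :
    Lx (u ++ v) v := by
  rcases lex_dichotomy huv with hp | hxy
  · obtain ⟨s, rfl⟩ := hp
    have hs : s ≠ [] := by
      rintro rfl
      simp at huv
    have h1 : Lx (u ++ s) s := hv.2 u s hu hs rfl
    have h2 := lex_append_left (u := u) h1
    exact h2
  · have := hxy v []
    simpa using this

lemma slyndon_append {u v : List Bool} (hu : SLyndon u) (hv : SLyndon v) (huv : Lx u v) :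
    SLyndon (u ++ v) := by
  refine ⟨by simp [hu.1], ?_⟩
  intro p t hp ht heq
  rcases List.append_eq_append_iff.mp heq with ⟨w, hw1, hw2⟩ | ⟨w, hw1, hw2⟩
  · -- p = u ++ w, v = w ++ t
    rcases eq_or_ne w [] with rfl | hw
    · simp at hw2
      subst hw2
      exact append_lex_right hv huv hu.1
    · have h1 : Lx v t := hv.2 w t hw ht hw2
      exact lx_trans (append_lex_right hv huv hu.1) h1
  · -- u = p ++ w, t = w ++ v
    rcases eq_or_ne w [] with rfl | hw
    · simp at hw1 hw2
      subst hw1; subst hw2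
      exact append_lex_right hv huv hu.1
    · have h1 : Lx u w := hu.2 p w hp hw hw1
      have hlen : w.length < u.length := by
        have := congrArg List.length hw1
        simp [List.length_append] at this
        have := List.length_pos_iff.mpr hp
        omega
      rcases lex_dichotomy h1 with hpre | hxy
      · exact absurd (List.IsPrefix.length_le hpre) (by omega)
      · subst hw2
        exact hxy v v

lemma lx_of_lx_ne_prefix {r w : List Bool} (h : Lx r w) (x : List Bool) : Lx r (w ++ x) := by
  rcases lex_dichotomy h with hp | hxy
  · obtain ⟨s, rfl⟩ := hp
    have hs : s ≠ [] := by rintro rfl; simp at h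
    have : Lx r (r ++ (s ++ x)) := lex_of_prefix r (by simp [hs])
    simpa using this
  · have := hxy [] x
    simpa using this

-- continuing inside namespace SBAux, with IsLyndon, WordLt, wStep etc available
section Part2

lemma slyndon_isLyndon {u : List Bool} (h : SLyndon u) : IsLyndon u := by
  refine ⟨h.1, ?_⟩
  intro v t hv ht heq
  have hut : Lx u t := h.2 v t hv ht heq
  rcases lex_dichotomy hut with hp | hxy
  · exfalso
    have h1 := List.IsPrefix.length_le hp
    have h2 := congrArg List.length heq
    simp [List.length_append] at h2
    have := List.length_pos_iff.mpr hv
    omega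
  · have h1 := hxy [] v
    rw [List.append_nil] at h1
    rw [← heq]
    exact h1

lemma isLyndon_not_bordered {u v t w : List Bool} (h : IsLyndon u)
    (hv : v ≠ []) (ht : t ≠ []) (hw : w ≠ [])
    (h1 : u = v ++ t) (h2 : u = t ++ w) : False := by
  have hvt : Lx (v ++ t) (t ++ v) := h.2 v t hv ht h1
  have htw : Lx (t ++ w) (w ++ t) := h.2 t w ht hw h2
  have hlen : w.length = v.length := by
    have e1 := congrArg List.length h1
    have e2 := congrArg List.length h2
    simp [List.length_append] at e1 e2
    omega
  have h3 : Lx (t ++ w) (t ++ v) := by rw [← h1] at hvt; rw [h2] at hvt; exact hvt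
  have hwv : Lx w v := lex_of_append_left h3
  rcases lex_dichotomy hwv with hp | hxy
  · have : w = v := List.IsPrefix.eq_of_length hp hlen
    subst this
    exact lx_irrefl hwv
  · have h4 : Lx (w ++ t) (v ++ t) := hxy t t
    have h5 : Lx (v ++ t) (w ++ t) := by rw [← h2] at htw; rw [h1] at htw; exact htw
    exact lx_asymm h4 h5

lemma isLyndon_slyndon {u : List Bool} (h : IsLyndon u) : SLyndon u := by
  refine ⟨h.1, ?_⟩
  intro v t hv ht heq
  have hl : Lx u (t ++ v) := by rw [heq]; exact h.2 v t hv ht heq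
  rcases lex_append_right_cases t hl with hp | hy
  · obtain ⟨w, hw⟩ := hp
    have hwne : w ≠ [] := by
      rintro rfl
      rw [List.append_nil] at hw
      have e1 := congrArg List.length heq
      have e2 := congrArg List.length hw
      simp [List.length_append] at e1 e2
      have := List.length_pos_iff.mpr hv
      omega
    exact absurd (isLyndon_not_bordered h hv ht hwne heq hw.symm) not_false
  · have := hy []
    simpa using this

/-- Invariant carried along the Stern–Brocot word recursion. -/
def Good (l r : List Bool) : Prop :=
  SLyndon l ∧ SLyndon r ∧ Lx l r ∧
    ∀ v t : List Bool, v ≠ [] → t ≠ [] → l = v ++ t → (r = t ∨ Lx r t)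

lemma good_init : Good [false] [true] := by
  refine ⟨slyndon_singleton false, slyndon_singleton true, List.Lex.rel (by decide), ?_⟩
  intro v t hv ht h
  exfalso
  have := congrArg List.length h
  simp [List.length_append] at this
  have hv' : 0 < v.length := List.length_pos_iff.mpr hv
  have ht' : 0 < t.length := List.length_pos_iff.mpr ht
  omega

lemma good_step {l r : List Bool} (h : Good l r) (b : Bool) :
    Good (wStep (l, r) b).1 (wStep (l, r) b).2 := by
  obtain ⟨hl, hr, hlr, hsuf⟩ := h
  cases b with
  | false =>
    show Good l (l ++ r)
    refine ⟨hl, slyndon_append hl hr hlr, lex_of_prefix l hr.1, ?_⟩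
    intro v t hv ht heq
    right
    have h1 : Lx l t := hl.2 v t hv ht heq
    rcases lex_dichotomy h1 with hp | hxy
    · exfalso
      have h2 := List.IsPrefix.length_le hp
      have h3 := congrArg List.length heq
      simp [List.length_append] at h3
      have := List.length_pos_iff.mpr hv
      omega
    · have := hxy r []
      simpa using this
  | true =>
    show Good (l ++ r) r
    refine ⟨slyndon_append hl hr hlr, hr, append_lex_right hr hlr hl.1, ?_⟩
    intro v t hv ht heq
    rcases List.append_eq_append_iff.mp heq with ⟨w, hw1, hw2⟩ | ⟨w, hw1, hw2⟩
    · -- v = l ++ w, r = w ++ t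
      rcases eq_or_ne w [] with rfl | hw
      · left; simpa using hw2
      · right; exact hr.2 w t hw ht hw2
    · -- l = v ++ w, t = w ++ r
      rcases eq_or_ne w [] with rfl | hw
      · left; simp at hw2; exact hw2.symm
      · right
        rcases hsuf v w hv hw hw1 with rfl | hrw
        · rw [hw2]
          exact lex_of_prefix r hr.1
        · rw [hw2]
          exact lx_of_lx_ne_prefix hrw r

lemma good_foldl : ∀ (w : List Bool) (p : List Bool × List Bool), Good p.1 p.2 →
    Good (w.foldl wStep p).1 (w.foldl wStep p).2 := by
  intro w
  induction w with
  | nil => intro p h; exact h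
  | cons b w ih =>
    intro p h
    obtain ⟨l, r⟩ := p
    exact ih (wStep (l, r) b) (good_step h b)

end Part2

end SBAux

/-- For every path `w`: the words `ℓ(w)`, `r(w)` and `γ(w) = ℓ(w) ++ r(w)` are
Lyndon, `ℓ(w) < r(w)`, and `γ(w) = ℓ(w) ++ r(w)` is the Shirshow decomposition
of `γ(w)`: for every factorization `γ(w) = v ++ v'` into two nonempty Lyndon
words, the length of `ℓ(w)` is at most the length of `v`. -/
theorem gammaWord_lyndon_shirshow (w : List Bool) :
    IsLyndon (lWord w) ∧ IsLyndon (rWord w) ∧ IsLyndon (gammaWord w) ∧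
    WordLt (lWord w) (rWord w) ∧
    ∀ v v' : List Bool, v ≠ [] → v' ≠ [] → IsLyndon v → IsLyndon v' →
      gammaWord w = v ++ v' → (lWord w).length ≤ v.length := by
  have G : SBAux.Good (lWord w) (rWord w) :=
    SBAux.good_foldl w ([false], [true]) SBAux.good_init
  obtain ⟨hl, hr, hlr, hsuf⟩ := G
  refine ⟨SBAux.slyndon_isLyndon hl, SBAux.slyndon_isLyndon hr,
    SBAux.slyndon_isLyndon (SBAux.slyndon_append hl hr hlr), hlr, ?_⟩
  intro v v' hv hv' _ hLv' heq
  have heq' : lWord w ++ rWord w = v ++ v' := heq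
  rcases List.append_eq_append_iff.mp heq' with ⟨s, hs1, hs2⟩ | ⟨s, hs1, hs2⟩
  · -- v = lWord w ++ s
    rw [hs1]
    simp [List.length_append]
  · -- lWord w = v ++ s, v' = s ++ rWord w
    rcases eq_or_ne s [] with rfl | hsne
    · rw [List.append_nil] at hs1
      rw [hs1]
    · exfalso
      have hSv' := SBAux.isLyndon_slyndon hLv'
      have hv'r : SBAux.Lx v' (rWord w) := hSv'.2 s (rWord w) hsne hr.1 hs2
      rcases hsuf v s hv hsne hs1 with rfl | hrs
      · -- s = rWord w, so v' = rWord w ++ rWord w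
        have : SBAux.Lx (rWord w) v' := by
          rw [hs2]
          exact SBAux.lex_of_prefix (rWord w) hr.1
        exact SBAux.lx_asymm this hv'r
      · -- rWord w < s
        have : SBAux.Lx (rWord w) v' := by
          rw [hs2]
          exact SBAux.lx_of_lx_ne_prefix hrs (rWord w)
        exact SBAux.lx_asymm this hv'r
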